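/- For all complex numbers z, a, b with |a| = 1, one has |(z+a)(a+b)|^2 + |(z-a)(a-b)|^2 = 2|z+b|^2 + 2|z·b + a^2|^2. -/

import Mathlib

theorem stmt0 (z a b : ℂ) (ha : ‖a‖ = 1) :
    ‖(z + a) * (a + b)‖ ^ 2 + ‖(z - a) * (a - b)‖ ^ 2 =
      2 * ‖z + b‖ ^ 2 + 2 * ‖z * b + a ^ 2‖ ^ 2 := by
  have ha' : a.re ^ 2 + a.im ^ 2 = 1 := by
    have := Complex.sq_norm a
    rw [ha] at this
    simpa [Complex.normSq_apply, sq] using this.symm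
  rw [show (a:ℂ)^2 = a*a from sq a]
  simp only [Complex.sq_norm, Complex.normSq_apply, Complex.mul_re, Complex.mul_im,
    Complex.add_re, Complex.add_im, Complex.sub_re, Complex.sub_im]
  linear_combination (2*(z.re+b.re)^2 + 2*(z.im+b.im)^2) * ha'
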